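/- Zero sampled Bellman error does not control the L^p distance to Q*. Consider the explicit deterministic MDP on [−1,1] (with any k₂ ≥ k₁ > 0 and γ ∈ (0,1)), and let Q* be its unique bounded measurable fixed point of T_B. Then for every countable set B₀ ⊆ [−1,1] and every n ∈ ℕ there exists a bounded measurable Q : [−1,1] × A → ℝ such that (T_B Q)(s, a) = Q(s, a) for every s ∈ B₀ and every a ∈ A, and yet ‖Q − Q*‖_{L^p} ≥ n for every p ∈ [1, ∞]. Consequently, for any state-action weighting supported on a countable set of states, the weighted Bellman error of Q vanishes while Q is arbitrarily far from Q* in every L^p norm. -/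

import Mathlib

open MeasureTheory
open scoped ENNReal

/-- Deterministic transitions of the explicit MDP on `[-1,1]`: action `a₁ = false` moves left
by `0.1` (when staying in the interval), action `a₂ = true` moves right by `0.1`. -/
noncomputable def fstep (s : ℝ) (a : Bool) : ℝ :=
  if a then (if -1 ≤ s ∧ s ≤ 0.9 then s + 0.1 else s)
  else (if -0.9 ≤ s ∧ s ≤ 1 then s - 0.1 else s)

/-- Rewards of the explicit MDP: `r(s, aᵢ) = kᵢ · s`. -/
noncomputable def rew (k₁ k₂ : ℝ) (s : ℝ) (a : Bool) : ℝ :=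
  if a then k₂ * s else k₁ * s

/-- Bellman optimality operator of the explicit deterministic MDP. -/
noncomputable def TB (k₁ k₂ γ : ℝ) (Q : ℝ → Bool → ℝ) (s : ℝ) (a : Bool) : ℝ :=
  rew k₁ k₂ s a + γ * max (Q (fstep s a) false) (Q (fstep s a) true)

/-- The measure on `[-1,1] × A`: Lebesgue on `[-1,1]` times counting measure on actions. -/
noncomputable def nu : Measure (ℝ × Bool) :=
  (volume.restrict (Set.Icc (-1 : ℝ) 1)).prod Measure.count

/-- Zero sampled Bellman error does not control the `L^p` distance to `Q*`: for every countable
`B₀ ⊆ [-1,1]` and every `n` there is a bounded measurable `Q` whose Bellman error vanishes on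
`B₀` while `‖Q − Q*‖_{L^p} ≥ n` for every `p ∈ [1,∞]`. -/
theorem stmt10 (k₁ k₂ : ℝ) (hk₁ : 0 < k₁) (hk : k₁ ≤ k₂)
    (γ : ℝ) (hγ0 : 0 < γ) (hγ1 : γ < 1)
    (Qstar : ℝ → Bool → ℝ)
    (hQstarMeas : ∀ a, Measurable (fun s => Qstar s a))
    (hQstarBdd : ∃ M, ∀ s a, |Qstar s a| ≤ M)
    (hfix : ∀ s a, TB k₁ k₂ γ Qstar s a = Qstar s a) :
    ∀ B₀ : Set ℝ, B₀.Countable → B₀ ⊆ Set.Icc (-1:ℝ) 1 →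
      ∀ n : ℕ, ∃ Q : ℝ → Bool → ℝ,
        (∀ a, Measurable (fun s => Q s a)) ∧ (∃ M, ∀ s a, |Q s a| ≤ M) ∧
        (∀ s ∈ B₀, ∀ a, TB k₁ k₂ γ Q s a = Q s a) ∧
        ∀ p : ℝ≥0∞, 1 ≤ p →
          (n : ℝ≥0∞) ≤ eLpNorm (fun x : ℝ × Bool => Q x.1 x.2 - Qstar x.1 x.2) p nu := by
  intro B₀ hB₀c hB₀sub n
  classical
  set B : Set ℝ := ⋃ s ∈ B₀, Set.range (fun j : ℤ => s + j * 0.1) with hBdef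
  have hBc : B.Countable := hB₀c.biUnion fun s _ => Set.countable_range _
  have hmem : ∀ s ∈ B₀, ∀ j : ℤ, s + j * 0.1 ∈ B := by
    intro s hs j
    exact Set.mem_biUnion hs ⟨j, rfl⟩
  have hB₀B : B₀ ⊆ B := by
    intro s hs
    have := hmem s hs 0
    simpa using this
  have hBclosed : ∀ x ∈ B, ∀ a, fstep x a ∈ B := by
    intro x hx a
    obtain ⟨s, hs, j, hj⟩ : ∃ s ∈ B₀, ∃ j : ℤ, s + j * 0.1 = x := by
      simpa [hBdef, Set.mem_iUnion] using hx
    have hx1 : x + 0.1 ∈ B := by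
      have := hmem s hs (j + 1)
      have e : s + (↑(j + 1) : ℝ) * 0.1 = x + 0.1 := by push_cast; linarith
      rwa [e] at this
    have hx2 : x - 0.1 ∈ B := by
      have := hmem s hs (j - 1)
      have e : s + (↑(j - 1) : ℝ) * 0.1 = x - 0.1 := by push_cast; linarith
      rwa [e] at this
    cases a <;> simp only [fstep] <;> split_ifs <;> assumption
  -- the perturbed Q
  set Q : ℝ → Bool → ℝ := fun s a => Qstar s a + Set.indicator Bᶜ (fun _ => (n : ℝ)) s with hQdef
  refine ⟨Q, ?_, ?_, ?_, ?_⟩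
  · intro a
    exact (hQstarMeas a).add (measurable_const.indicator hBc.measurableSet.compl)
  · obtain ⟨M, hM⟩ := hQstarBdd
    refine ⟨M + n, fun s a => ?_⟩
    have h1 : |Set.indicator Bᶜ (fun _ => (n : ℝ)) s| ≤ n := by
      by_cases h : s ∈ Bᶜ <;> simp [Set.indicator, h]
    calc |Q s a| ≤ |Qstar s a| + |Set.indicator Bᶜ (fun _ => (n : ℝ)) s| := abs_add_le _ _
      _ ≤ M + n := add_le_add (hM s a) h1
  · intro s hs a
    have hsB : s ∈ B := hB₀B hs
    have hQs : ∀ x ∈ B, ∀ b, Q x b = Qstar x b := by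
      intro x hx b
      simp only [hQdef]
      rw [Set.indicator_of_notMem (Set.notMem_compl_iff.2 hx), add_zero]
    have hfs : fstep s a ∈ B := hBclosed s hsB a
    have : TB k₁ k₂ γ Q s a = TB k₁ k₂ γ Qstar s a := by
      simp only [TB, hQs _ hfs]
    rw [this, hfix, hQs s hsB]
  · intro p hp
    have hp0 : p ≠ 0 := fun h => by simp [h] at hp
    -- the difference is a.e. equal to the constant n
    have hnull : nu (B ×ˢ (Set.univ : Set Bool)) = 0 := by
      rw [nu, Measure.prod_prod]
      have hB0 : (volume.restrict (Set.Icc (-1 : ℝ) 1)) B = 0 := by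
        have h1 : (volume.restrict (Set.Icc (-1 : ℝ) 1)) B ≤ volume B :=
          Measure.restrict_apply_le _ _
        have h2 : volume B = 0 := hBc.measure_zero _
        exact le_antisymm (h2 ▸ h1) zero_le
      rw [hB0, zero_mul]
    have hae : (fun x : ℝ × Bool => Q x.1 x.2 - Qstar x.1 x.2) =ᵐ[nu]
        (fun _ => (n : ℝ)) := by
      have hmemae : (B ×ˢ (Set.univ : Set Bool))ᶜ ∈ MeasureTheory.ae nu :=
        MeasureTheory.mem_ae_iff.2 (by rw [compl_compl]; exact hnull)
      refine Filter.eventuallyEq_of_mem hmemae ?_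
      intro x hx
      have hxB : x.1 ∉ B := fun h => hx ⟨h, Set.mem_univ _⟩
      simp [hQdef, Set.indicator_of_mem (Set.mem_compl hxB)]
    rw [eLpNorm_congr_ae hae]
    have h1 : (1 : ℝ≥0∞) ≤ nu Set.univ := by
        rw [nu, ← Set.univ_prod_univ, Measure.prod_prod, Measure.restrict_apply_univ]
        have hv : volume (Set.Icc (-1:ℝ) 1) = ENNReal.ofReal 2 := by
          rw [Real.volume_Icc]; norm_num
        rw [hv]
        calc (1 : ℝ≥0∞) = 1 * 1 := (one_mul 1).symm
          _ ≤ ENNReal.ofReal 2 * Measure.count (Set.univ : Set Bool) := by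
            refine mul_le_mul' ?_ ?_
            · rw [show (1:ℝ≥0∞) = ENNReal.ofReal 1 by simp]
              exact ENNReal.ofReal_le_ofReal (by norm_num)
            · have : Measure.count ({true} : Set Bool) ≤ Measure.count (Set.univ : Set Bool) :=
                measure_mono (Set.subset_univ _)
              simpa [Measure.count_singleton] using this
    have hnu_ne : nu ≠ 0 := by
      intro h
      rw [h] at h1
      simp at h1
    rw [eLpNorm_const _ hp0 hnu_ne]
    have hone : (1 : ℝ≥0∞) ≤ nu Set.univ ^ (1 / p.toReal) := by
      calc (1 : ℝ≥0∞) = 1 ^ (1 / p.toReal) := (ENNReal.one_rpow _).symm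
        _ ≤ nu Set.univ ^ (1 / p.toReal) :=
          ENNReal.rpow_le_rpow h1 (by positivity)
    have hnn : ‖(n : ℝ)‖ₑ = (n : ℝ≥0∞) := by
      simp
    rw [hnn]
    exact le_mul_of_one_le_right zero_le hone
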